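/- Let D ∈ GLₙ(ℤ) and let λ₁, …, λₙ be the complex eigenvalues of D (with multiplicity). Then there exist non-negative integers a, b and complex numbers μ₁, …, μ_a, ν₁, …, ν_b such that for all complex z in a disk of positive radius around 0, the series ∑_{k=1}^{∞} [( ∏_{i=1}^{n} |1 − λᵢᵏ| + ∏_{i=1}^{n} |1 + λᵢᵏ| )/2] · zᵏ/k converges and exp of its sum equals ∏_{i=1}^{b}(1 − νᵢ z) / ∏_{i=1}^{a}(1 − μᵢ z); in particular this function is rational. -/

import Mathlib

open Matrix Polynomial

open Complex

open Classical in
noncomputable def pcount (n : ℕ) (lam : Fin n → ℂ) : ℕ :=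
  (Finset.univ.filter (fun i => (lam i).im = 0 ∧ 1 < (lam i).re)).card

open Classical in
noncomputable def qcount (n : ℕ) (lam : Fin n → ℂ) : ℕ :=
  (Finset.univ.filter (fun i => (lam i).im = 0 ∧ (lam i).re < -1)).card


lemma signKey (g σ : ℂ → ℂ) (hg : ∀ z, g ((starRingEnd ℂ) z) = (starRingEnd ℂ) (g z))
    (hσr : ∀ z : ℂ, z.im = 0 → ∃ y : ℝ, 0 ≤ y ∧ σ z * g z = (y : ℂ))
    (hσ1 : ∀ z : ℂ, z.im ≠ 0 → σ z = 1)
    (M : Multiset ℂ) : M.map (starRingEnd ℂ) = M →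
      ∃ y : ℝ, 0 ≤ y ∧ (M.map σ).prod * (M.map g).prod = (y : ℂ) := by
  induction M using Multiset.strongInductionOn with
  | _ M ih =>
    intro hM
    rcases Multiset.empty_or_exists_mem M with rfl | ⟨z, hz⟩
    · exact ⟨1, by norm_num⟩
    by_cases hzim : z.im = 0
    · obtain ⟨M', rfl⟩ : ∃ M', M = z ::ₘ M' := ⟨M.erase z, (Multiset.cons_erase hz).symm⟩
      have hcz : (starRingEnd ℂ) z = z := Complex.conj_eq_iff_im.mpr hzim
      have hM' : M'.map (starRingEnd ℂ) = M' := by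
        rw [Multiset.map_cons, hcz] at hM
        exact (Multiset.cons_inj_right z).mp hM
      obtain ⟨y₂, hy₂0, hy₂⟩ := ih M' (Multiset.lt_cons_self M' z) hM'
      obtain ⟨y₁, hy₁0, hy₁⟩ := hσr z hzim
      refine ⟨y₁ * y₂, mul_nonneg hy₁0 hy₂0, ?_⟩
      simp only [Multiset.map_cons, Multiset.prod_cons]
      push_cast
      rw [← hy₁, ← hy₂]; ring
    · have hcz : (starRingEnd ℂ) z ∈ M := by
        conv => rw [← hM]
        exact Multiset.mem_map_of_mem _ hz
      have hne : (starRingEnd ℂ) z ≠ z := by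
        intro h
        exact hzim (Complex.conj_eq_iff_im.mp h)
      obtain ⟨M₁, rfl⟩ : ∃ M₁, M = z ::ₘ M₁ := ⟨M.erase z, (Multiset.cons_erase hz).symm⟩
      have hcz1 : (starRingEnd ℂ) z ∈ M₁ := by
        rcases Multiset.mem_cons.mp hcz with h | h
        · exact absurd h hne
        · exact h
      obtain ⟨M', rfl⟩ : ∃ M', M₁ = (starRingEnd ℂ) z ::ₘ M' :=
        ⟨M₁.erase _, (Multiset.cons_erase hcz1).symm⟩
      have hM' : M'.map (starRingEnd ℂ) = M' := by
        simp only [Multiset.map_cons, Complex.conj_conj] at hM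
        rw [Multiset.cons_swap] at hM
        exact (Multiset.cons_inj_right _).mp ((Multiset.cons_inj_right _).mp hM)
      have hlt : M' < z ::ₘ ((starRingEnd ℂ) z ::ₘ M') :=
        lt_trans (Multiset.lt_cons_self _ _) (Multiset.lt_cons_self _ _)
      obtain ⟨y₂, hy₂0, hy₂⟩ := ih M' hlt hM'
      refine ⟨Complex.normSq (g z) * y₂, mul_nonneg (Complex.normSq_nonneg _) hy₂0, ?_⟩
      have h1 : σ z = 1 := hσ1 z hzim
      have h2 : σ ((starRingEnd ℂ) z) = 1 := by
        apply hσ1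
        simp [hzim]
      simp only [Multiset.map_cons, Multiset.prod_cons, h1, h2, hg z]
      push_cast
      rw [← hy₂, ← Complex.mul_conj]
      ring

lemma real_sign_minus (k : ℕ) (x : ℝ) :
    ∃ y : ℝ, 0 ≤ y ∧
      ((if 1 < x then (-1 : ℂ) else 1) * (if x < -1 then (-1 : ℂ) ^ (k + 1) else 1))
        * (1 - (x : ℂ) ^ k) = (y : ℝ) := by
  by_cases h1 : 1 < x
  · have h2 : ¬ x < -1 := by linarith
    refine ⟨x ^ k - 1, by nlinarith [one_le_pow₀ h1.le (n := k)], ?_⟩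
    simp only [if_pos h1, if_neg h2]
    push_cast
    ring
  · by_cases h2 : x < -1
    · rcases Nat.even_or_odd k with he | ho
      · have hx : (1 : ℝ) ≤ x ^ k := by
          have : (1 : ℝ) ≤ |x| ^ k := one_le_pow₀ (by rw [abs_of_neg (by linarith)]; linarith) 
          rwa [he.pow_abs] at this
        refine ⟨x ^ k - 1, by linarith, ?_⟩
        have hk1 : Odd (k + 1) := Even.add_one he
        simp only [if_neg h1, if_pos h2, hk1.neg_one_pow]
        push_cast
        ring
      · have hx : x ^ k ≤ -1 := by
          have h3 : (1 : ℝ) ≤ (-x) ^ k := one_le_pow₀ (by linarith)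
          rw [ho.neg_pow] at h3
          linarith
        refine ⟨1 - x ^ k, by linarith, ?_⟩
        have hk1 : Even (k + 1) := Odd.add_one ho
        simp only [if_neg h1, if_pos h2, hk1.neg_one_pow]
        push_cast
        ring
    · have hx : |x ^ k| ≤ 1 := by
        rw [_root_.abs_pow]
        exact pow_le_one₀ (abs_nonneg x) (abs_le.mpr ⟨by linarith, by linarith⟩)
      obtain ⟨hl, hr⟩ := abs_le.mp hx
      refine ⟨1 - x ^ k, by linarith, ?_⟩
      simp only [if_neg h1, if_neg h2]
      push_cast
      ring


lemma real_sign_plus (k : ℕ) (x : ℝ) :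
    ∃ y : ℝ, 0 ≤ y ∧
      (if x < -1 then (-1 : ℂ) ^ k else 1) * (1 + (x : ℂ) ^ k) = (y : ℝ) := by
  by_cases h2 : x < -1
  · rcases Nat.even_or_odd k with he | ho
    · have hx : (1 : ℝ) ≤ x ^ k := by
        have : (1 : ℝ) ≤ |x| ^ k := one_le_pow₀ (by rw [abs_of_neg (by linarith)]; linarith)
        rwa [he.pow_abs] at this
      refine ⟨1 + x ^ k, by linarith, ?_⟩
      simp only [if_pos h2, he.neg_one_pow]
      push_cast
      ring
    · have hx : x ^ k ≤ -1 := by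
        have h3 : (1 : ℝ) ≤ (-x) ^ k := one_le_pow₀ (by linarith)
        rw [ho.neg_pow] at h3
        linarith
      refine ⟨-1 - x ^ k, by linarith, ?_⟩
      simp only [if_pos h2, ho.neg_one_pow]
      push_cast
      ring
  · refine ⟨1 + x ^ k, ?_, ?_⟩
    · rcases le_or_gt 0 x with hx0 | hx0
      · have := pow_nonneg hx0 k
        linarith
      · have hx : |x ^ k| ≤ 1 := by
          rw [_root_.abs_pow]
          exact pow_le_one₀ (abs_nonneg x) (abs_le.mpr ⟨by linarith, by linarith⟩)
        obtain ⟨hl, hr⟩ := abs_le.mp hx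
        linarith
    · simp only [if_neg h2]
      push_cast
      ring

lemma prod_ite_card {α : Type*} [Fintype α] (P : α → Prop) [DecidablePred P] (c : ℂ) :
    ∏ i, (if P i then c else 1) = c ^ (Finset.univ.filter P).card := by
  rw [← Finset.prod_filter, Finset.prod_const]


lemma absProdMinus (n : ℕ) (lam : Fin n → ℂ)
    (hM : (Multiset.map lam Finset.univ.val).map (starRingEnd ℂ) = Multiset.map lam Finset.univ.val)
    (k : ℕ) :
    ((∏ i, ‖1 - lam i ^ k‖ : ℝ) : ℂ)
      = ((-1) ^ pcount n lam * ((-1 : ℂ) ^ (k + 1)) ^ qcount n lam) * ∏ i, (1 - lam i ^ k) := by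
  classical
  set σ : ℂ → ℂ := fun z => (if z.im = 0 ∧ 1 < z.re then (-1 : ℂ) else 1) *
    (if z.im = 0 ∧ z.re < -1 then (-1 : ℂ) ^ (k + 1) else 1) with hσdef
  set g : ℂ → ℂ := fun z => 1 - z ^ k with hgdef
  have hg : ∀ z, g ((starRingEnd ℂ) z) = (starRingEnd ℂ) (g z) := by
    intro z; simp [hgdef]
  have hσr : ∀ z : ℂ, z.im = 0 → ∃ y : ℝ, 0 ≤ y ∧ σ z * g z = (y : ℂ) := by
    intro z hz
    obtain ⟨y, hy0, hy⟩ := real_sign_minus k z.re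
    refine ⟨y, hy0, ?_⟩
    have hzx : z = (z.re : ℂ) := Complex.ext rfl (by simp [hz])
    rw [hσdef, hgdef]
    simp only [hz, eq_self_iff_true, true_and]
    rw [hzx]
    simp only [Complex.ofReal_re]
    exact hy
  have hσ1 : ∀ z : ℂ, z.im ≠ 0 → σ z = 1 := by
    intro z hz
    rw [hσdef]
    simp [hz]
  obtain ⟨y, hy0, hy⟩ := signKey g σ hg hσr hσ1 _ hM
  have hσprod : ((Multiset.map lam Finset.univ.val).map σ).prod
      = (-1) ^ pcount n lam * ((-1 : ℂ) ^ (k + 1)) ^ qcount n lam := by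
    have h0 : ((Multiset.map lam Finset.univ.val).map σ).prod = ∏ i, σ (lam i) := by
      rw [Finset.prod_eq_multiset_prod, Multiset.map_map]; rfl
    rw [h0, hσdef]
    simp only
    rw [Finset.prod_mul_distrib, prod_ite_card, prod_ite_card]
    rw [pcount, qcount]

  have hgprod : ((Multiset.map lam Finset.univ.val).map g).prod = ∏ i, (1 - lam i ^ k) := by
    rw [Finset.prod_eq_multiset_prod, Multiset.map_map]; rfl
  rw [hσprod, hgprod] at hy
  have habs : (∏ i, ‖1 - lam i ^ k‖) = y := by
    have h1 : (∏ i, ‖1 - lam i ^ k‖) = ‖∏ i, (1 - lam i ^ k)‖ := by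
      rw [Complex.norm_prod]
    have hsgn : ‖(-1) ^ pcount n lam * ((-1 : ℂ) ^ (k + 1)) ^ qcount n lam‖ = 1 := by
      simp [_root_.map_mul, map_pow]
    have h2 : ‖∏ i, (1 - lam i ^ k)‖ = ‖((y : ℝ) : ℂ)‖ := by
      rw [← hy, norm_mul, hsgn, one_mul]
    rw [h1, h2, Complex.norm_of_nonneg hy0]
  rw [habs, ← hy]


lemma absProdPlus (n : ℕ) (lam : Fin n → ℂ)
    (hM : (Multiset.map lam Finset.univ.val).map (starRingEnd ℂ) = Multiset.map lam Finset.univ.val)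
    (k : ℕ) :
    ((∏ i, ‖1 + lam i ^ k‖ : ℝ) : ℂ)
      = ((-1 : ℂ) ^ k) ^ qcount n lam * ∏ i, (1 + lam i ^ k) := by
  classical
  set σ : ℂ → ℂ := fun z => if z.im = 0 ∧ z.re < -1 then (-1 : ℂ) ^ k else 1 with hσdef
  set g : ℂ → ℂ := fun z => 1 + z ^ k with hgdef
  have hg : ∀ z, g ((starRingEnd ℂ) z) = (starRingEnd ℂ) (g z) := by
    intro z; simp [hgdef]
  have hσr : ∀ z : ℂ, z.im = 0 → ∃ y : ℝ, 0 ≤ y ∧ σ z * g z = (y : ℂ) := by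
    intro z hz
    obtain ⟨y, hy0, hy⟩ := real_sign_plus k z.re
    refine ⟨y, hy0, ?_⟩
    have hzx : z = (z.re : ℂ) := Complex.ext rfl (by simp [hz])
    rw [hσdef, hgdef]
    simp only [hz, eq_self_iff_true, true_and]
    rw [hzx]
    simp only [Complex.ofReal_re]
    exact hy
  have hσ1 : ∀ z : ℂ, z.im ≠ 0 → σ z = 1 := by
    intro z hz
    rw [hσdef]
    simp [hz]
  obtain ⟨y, hy0, hy⟩ := signKey g σ hg hσr hσ1 _ hM
  have hσprod : ((Multiset.map lam Finset.univ.val).map σ).prod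
      = ((-1 : ℂ) ^ k) ^ qcount n lam := by
    have h0 : ((Multiset.map lam Finset.univ.val).map σ).prod = ∏ i, σ (lam i) := by
      rw [Finset.prod_eq_multiset_prod, Multiset.map_map]; rfl
    rw [h0, hσdef]
    simp only
    rw [prod_ite_card]
    rw [qcount]
  have hgprod : ((Multiset.map lam Finset.univ.val).map g).prod = ∏ i, (1 + lam i ^ k) := by
    rw [Finset.prod_eq_multiset_prod, Multiset.map_map]; rfl
  rw [hσprod, hgprod] at hy
  have habs : (∏ i, ‖1 + lam i ^ k‖) = y := by
    have h1 : (∏ i, ‖1 + lam i ^ k‖) = ‖∏ i, (1 + lam i ^ k)‖ := by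
      rw [Complex.norm_prod]
    have hsgn : ‖((-1 : ℂ) ^ k) ^ qcount n lam‖ = 1 := by
      simp [map_pow]
    have h2 : ‖∏ i, (1 + lam i ^ k)‖ = ‖((y : ℝ) : ℂ)‖ := by
      rw [← hy, norm_mul, hsgn, one_mul]
    rw [h1, h2, Complex.norm_of_nonneg hy0]
  rw [habs, ← hy]

open Classical in
lemma combo (n : ℕ) (lam : Fin n → ℂ)
    (hM : (Multiset.map lam Finset.univ.val).map (starRingEnd ℂ) = Multiset.map lam Finset.univ.val)
    (k : ℕ) :
    ((((∏ i, ‖1 - lam i ^ k‖) + ∏ i, ‖1 + lam i ^ k‖) / 2 : ℝ) : ℂ)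
      = ∑ t ∈ Finset.univ.powerset.filter
          (fun t : Finset (Fin n) => Even (pcount n lam + qcount n lam + t.card)),
          ((-1 : ℂ) ^ qcount n lam * ∏ i ∈ t, lam i) ^ k := by
  classical
  have hcast : ((((∏ i, ‖1 - lam i ^ k‖) + ∏ i, ‖1 + lam i ^ k‖) / 2 : ℝ) : ℂ)
      = (((∏ i, ‖1 - lam i ^ k‖ : ℝ) : ℂ) + ((∏ i, ‖1 + lam i ^ k‖ : ℝ) : ℂ)) / 2 := by
    push_cast
    ring
  rw [hcast, absProdMinus n lam hM k, absProdPlus n lam hM k]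
  have hV : ∏ i, (1 - lam i ^ k)
      = ∑ t ∈ Finset.univ.powerset, (-1 : ℂ) ^ t.card * (∏ i ∈ t, lam i) ^ k := by
    have h := Finset.prod_add (fun i => -(lam i ^ k)) (fun _ => (1 : ℂ)) Finset.univ
    simp only [Finset.prod_const_one, mul_one] at h
    calc ∏ i, (1 - lam i ^ k) = ∏ i, (-(lam i ^ k) + 1) := Finset.prod_congr rfl fun i _ => by ring
      _ = ∑ t ∈ Finset.univ.powerset, ∏ i ∈ t, -(lam i ^ k) := h
      _ = ∑ t ∈ Finset.univ.powerset, (-1 : ℂ) ^ t.card * (∏ i ∈ t, lam i) ^ k := by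
          refine Finset.sum_congr rfl fun t _ => ?_
          calc ∏ i ∈ t, -(lam i ^ k) = ∏ i ∈ t, ((-1) * lam i ^ k) := by
                refine Finset.prod_congr rfl fun i _ => by ring
            _ = (∏ _i ∈ t, (-1 : ℂ)) * ∏ i ∈ t, lam i ^ k := Finset.prod_mul_distrib
            _ = (-1 : ℂ) ^ t.card * (∏ i ∈ t, lam i) ^ k := by
                rw [Finset.prod_const, Finset.prod_pow]
  have hW : ∏ i, (1 + lam i ^ k)
      = ∑ t ∈ Finset.univ.powerset, (∏ i ∈ t, lam i) ^ k := by
    have h := Finset.prod_add (fun i => lam i ^ k) (fun _ => (1 : ℂ)) Finset.univ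
    simp only [Finset.prod_const_one, mul_one] at h
    calc ∏ i, (1 + lam i ^ k) = ∏ i, (lam i ^ k + 1) := Finset.prod_congr rfl fun i _ => by ring
      _ = ∑ t ∈ Finset.univ.powerset, ∏ i ∈ t, lam i ^ k := h
      _ = ∑ t ∈ Finset.univ.powerset, (∏ i ∈ t, lam i) ^ k := by
          refine Finset.sum_congr rfl fun t _ => ?_
          rw [Finset.prod_pow]
  rw [hV, hW, Finset.mul_sum, Finset.mul_sum, ← Finset.sum_add_distrib, Finset.sum_div,
    Finset.sum_filter]
  refine Finset.sum_congr rfl fun t _ => ?_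
  set p := pcount n lam
  set q := qcount n lam
  set π := ∏ i ∈ t, lam i
  have e2 : ((-1 : ℂ) ^ q * π) ^ k = ((-1 : ℂ) ^ k) ^ q * π ^ k := by
    rw [mul_pow, ← pow_mul, mul_comm q k, pow_mul]
  have e1 : ((-1 : ℂ) ^ (k + 1)) ^ q = ((-1 : ℂ) ^ k) ^ q * (-1 : ℂ) ^ q := by
    rw [pow_succ, mul_pow]
  rcases Nat.even_or_odd (p + q + t.card) with hpar | hpar
  · rw [if_pos hpar, e2, e1]
    have hv : (-1 : ℂ) ^ (p + q + t.card) = 1 := hpar.neg_one_pow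
    rw [pow_add, pow_add] at hv
    linear_combination (((-1 : ℂ) ^ k) ^ q * π ^ k / 2) * hv
  · rw [if_neg (Nat.not_even_iff_odd.mpr hpar), e1]
    have hv : (-1 : ℂ) ^ (p + q + t.card) = -1 := hpar.neg_one_pow
    rw [pow_add, pow_add] at hv
    linear_combination (((-1 : ℂ) ^ k) ^ q * π ^ k / 2) * hv

lemma conjM (n : ℕ) (D : Matrix (Fin n) (Fin n) ℤ)
    (lam : Fin n → ℂ)
    (hlam : (D.charpoly).map (Int.castRingHom ℂ) = ∏ i, (X - C (lam i))) :
    (Multiset.map lam Finset.univ.val).map (starRingEnd ℂ) = Multiset.map lam Finset.univ.val := by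
  have h1 : ∏ i, (X - C ((starRingEnd ℂ) (lam i))) = ∏ i, (X - C (lam i)) := by
    have := congrArg (Polynomial.map (starRingEnd ℂ)) hlam
    rw [Polynomial.map_map, Subsingleton.elim ((starRingEnd ℂ).comp (Int.castRingHom ℂ))
      (Int.castRingHom ℂ), hlam, Polynomial.map_prod] at this
    simp only [Polynomial.map_sub, Polynomial.map_X, Polynomial.map_C] at this
    exact this.symm
  have key : ∀ N : Multiset ℂ, (N.map fun a => X - C a).prod.roots = N :=
    fun N => Polynomial.roots_multiset_prod_X_sub_C N
  calc (Multiset.map lam Finset.univ.val).map (starRingEnd ℂ)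
      = (((Multiset.map lam Finset.univ.val).map (starRingEnd ℂ)).map
          (fun a => X - C a)).prod.roots := (key _).symm
    _ = (Multiset.map lam Finset.univ.val) := by
        rw [Multiset.map_map]
        have : (Multiset.map ((fun a => X - C a) ∘ (starRingEnd ℂ)) (Multiset.map lam Finset.univ.val)).prod
            = ∏ i, (X - C ((starRingEnd ℂ) (lam i))) := by
          rw [Finset.prod_eq_multiset_prod, Multiset.map_map]
          rfl
        have h2 : Multiset.map (fun i => X - C (lam i)) Finset.univ.val
            = Multiset.map (fun a => X - C a) (Multiset.map lam Finset.univ.val) := by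
          rw [Multiset.map_map]; rfl
        rw [this, h1, Finset.prod_eq_multiset_prod, h2, key]

lemma logSeriesAux (w : ℂ) (hw : ‖w‖ < 1) :
    HasSum (fun k : ℕ => w ^ (k + 1) / ((k + 1 : ℕ) : ℂ)) (-Complex.log (1 - w)) := by
  have h0 : HasSum (fun m : ℕ => w ^ m / m)
      (-Complex.log (1 - w) + ∑ i ∈ Finset.range 1, w ^ i / i) := by
    simpa using Complex.hasSum_taylorSeries_neg_log hw
  exact (hasSum_nat_add_iff 1).mpr h0

lemma one_sub_ne_aux (w : ℂ) (hw : ‖w‖ < 1) : 1 - w ≠ 0 := by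
  intro h
  have hw1 : w = 1 := by linear_combination -h
  rw [hw1] at hw
  simp at hw

/-- with `λ₁, …, λₙ` the complex eigenvalues of `D ∈ GLₙ(ℤ)`, there are complex
numbers `μ₁, …, μ_a, ν₁, …, ν_b` such that on a disk of positive radius about `0`, the series
`∑_{k≥1} [(∏|1-λᵢᵏ| + ∏|1+λᵢᵏ|)/2] zᵏ/k` converges and the exponential of its sum is the
rational function `∏(1-νᵢz) / ∏(1-μᵢz)`. -/
theorem stmt2 (n : ℕ) (D : Matrix (Fin n) (Fin n) ℤ) (hD : IsUnit D)
    (lam : Fin n → ℂ)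
    (hlam : (D.charpoly).map (Int.castRingHom ℂ) = ∏ i, (X - C (lam i))) :
    ∃ (a b : ℕ) (μ : Fin a → ℂ) (ν : Fin b → ℂ) (r : ℝ), 0 < r ∧
      ∀ z : ℂ, ‖z‖ < r →
        ∃ s : ℂ,
          HasSum (fun k : ℕ =>
            ((((∏ i, ‖1 - lam i ^ (k + 1)‖)
                + ∏ i, ‖1 + lam i ^ (k + 1)‖) / 2 : ℝ) : ℂ)
              * z ^ (k + 1) / (k + 1)) s ∧
          Complex.exp s = (∏ i, (1 - ν i * z)) / ∏ i, (1 - μ i * z) := by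
  classical
  have hM := conjM n D lam hlam
  set T : Finset (Finset (Fin n)) := Finset.univ.powerset.filter
    (fun t : Finset (Fin n) => Even (pcount n lam + qcount n lam + t.card)) with hTdef
  set μ' : Finset (Fin n) → ℂ := fun t => (-1 : ℂ) ^ qcount n lam * ∏ i ∈ t, lam i with hμ'def
  set μf : Fin T.card → ℂ := fun j => μ' (T.equivFin.symm j : Finset (Fin n)) with hμfdef
  set R : ℝ := ∑ t ∈ T, ‖μ' t‖ with hRdef
  have hR0 : 0 ≤ R := Finset.sum_nonneg fun t _ => norm_nonneg _
  have hR1 : (0 : ℝ) < R + 1 := by linarith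
  refine ⟨T.card, 0, μf, fun _ => 0, (R + 1)⁻¹, inv_pos.mpr hR1, ?_⟩
  intro z hz
  have hbound : ∀ t ∈ T, ‖μ' t * z‖ < 1 := by
    intro t ht
    have h1 : ‖μ' t‖ ≤ R :=
      Finset.single_le_sum (fun t _ => norm_nonneg (μ' t)) ht
    have h2 : ‖μ' t * z‖ = ‖μ' t‖ * ‖z‖ := by
      rw [norm_mul]
    rw [h2]
    calc ‖μ' t‖ * ‖z‖ ≤ (R + 1) * ‖z‖ :=
          mul_le_mul_of_nonneg_right (by linarith) (norm_nonneg z)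
      _ < (R + 1) * (R + 1)⁻¹ := mul_lt_mul_of_pos_left hz hR1
      _ = 1 := mul_inv_cancel₀ (ne_of_gt hR1)
  have hne : ∀ t ∈ T, 1 - μ' t * z ≠ 0 := fun t ht => one_sub_ne_aux _ (hbound t ht)
  have hshift : ∀ t ∈ T, HasSum (fun k : ℕ => (μ' t * z) ^ (k + 1) / ((k + 1 : ℕ) : ℂ))
      (-Complex.log (1 - μ' t * z)) := fun t ht => logSeriesAux _ (hbound t ht)
  have hA : HasSum (fun k : ℕ => ∑ t ∈ T, (μ' t * z) ^ (k + 1) / ((k + 1 : ℕ) : ℂ))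
      (∑ t ∈ T, -Complex.log (1 - μ' t * z)) := hasSum_sum hshift
  refine ⟨∑ t ∈ T, -Complex.log (1 - μ' t * z), ?_, ?_⟩
  · have hfun : (fun k : ℕ =>
        ((((∏ i, ‖1 - lam i ^ (k + 1)‖)
            + ∏ i, ‖1 + lam i ^ (k + 1)‖) / 2 : ℝ) : ℂ)
          * z ^ (k + 1) / (k + 1))
        = fun k : ℕ => ∑ t ∈ T, (μ' t * z) ^ (k + 1) / ((k + 1 : ℕ) : ℂ) := by
      funext k
      rw [combo n lam hM (k + 1)]
      rw [← hTdef]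
      rw [Finset.sum_mul, Finset.sum_div]
      refine Finset.sum_congr rfl fun t ht => ?_
      rw [hμ'def]
      push_cast
      ring
    rw [hfun]
    exact hA
  · rw [Complex.exp_sum]
    have hprod : ∏ t ∈ T, Complex.exp (-Complex.log (1 - μ' t * z))
        = (∏ t ∈ T, (1 - μ' t * z))⁻¹ := by
      rw [← Finset.prod_inv_distrib]
      refine Finset.prod_congr rfl fun t ht => ?_
      rw [Complex.exp_neg, Complex.exp_log (hne t ht)]
    rw [hprod]
    have hnum : (∏ i : Fin 0, (1 - (0 : ℂ) * z)) = 1 := by simp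
    have hden : ∏ j : Fin T.card, (1 - μf j * z) = ∏ t ∈ T, (1 - μ' t * z) := by
      rw [← Finset.prod_coe_sort T (fun t => 1 - μ' t * z)]
      exact Equiv.prod_comp T.equivFin.symm (fun x : T => 1 - μ' (x : Finset (Fin n)) * z)
    rw [hnum, hden, one_div]
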